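/- Let N > L ≥ 1, let θ₀, …, θ_{L−1} be real numbers with sin θ₀, …, sin θ_{L−1} pairwise distinct in (−1, 1], let A = [a(θ₀), …, a(θ_{L−1})] be the N×L steering matrix, let H be an L×L Hermitian positive definite matrix, let W be an N×N unitary matrix, and set M = Wᴴ A H Aᴴ W. Then for any θ with sin θ ∈ (−1, 1], the vector Wᴴ a(θ) is orthogonal to the kernel of M if and only if sin θ = sin θ_ℓ for some ℓ < L. -/

import Mathlib

open Matrix ComplexOrder

/-- MUSIC spectrum peaks exactly at true angles: with `M = Wᴴ A H Aᴴ W` (noise-free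
smoothed covariance, `A` the steering matrix of `L` paths with distinct sines, `H`
positive definite, `W` unitary), the candidate vector `Wᴴ a(θ)` is orthogonal to the
kernel of `M` iff `sin θ` coincides with one of the true path sines. -/
theorem stmt_9 (N L : ℕ) (hL : 1 ≤ L) (hNL : L < N)
    (θs : Fin L → ℝ) (hdist : Function.Injective fun ℓ => Real.sin (θs ℓ))
    (hrange : ∀ ℓ, Real.sin (θs ℓ) ∈ Set.Ioc (-1 : ℝ) 1)
    (a : ℝ → Fin N → ℂ)
    (ha : ∀ (θ : ℝ) (n : Fin N),
      a θ n = Complex.exp (-(Complex.I * (Real.pi : ℂ) * ((n : ℕ) : ℂ) * (Real.sin θ : ℂ))))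
    (A : Matrix (Fin N) (Fin L) ℂ) (hA : ∀ n ℓ, A n ℓ = a (θs ℓ) n)
    (H : Matrix (Fin L) (Fin L) ℂ) (hH : H.PosDef)
    (W : Matrix (Fin N) (Fin N) ℂ) (hW : W ∈ Matrix.unitaryGroup (Fin N) ℂ)
    (M : Matrix (Fin N) (Fin N) ℂ) (hM : M = Wᴴ * A * H * Aᴴ * W)
    (θ : ℝ) (hθ : Real.sin θ ∈ Set.Ioc (-1 : ℝ) 1) :
    (∀ x ∈ LinearMap.ker M.mulVecLin, dotProduct (star x) (Wᴴ.mulVec (a θ)) = 0) ↔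
      ∃ ℓ, Real.sin θ = Real.sin (θs ℓ) := by
  have hπ : (Real.pi : ℂ) ≠ 0 := by exact_mod_cast Real.pi_ne_zero
  set e : ℝ → ℂ := fun s => Complex.exp (-(Complex.I * (Real.pi : ℂ) * (s : ℂ))) with he
  have hpow : ∀ (θ' : ℝ) (n : Fin N), a θ' n = e (Real.sin θ') ^ (n : ℕ) := by
    intro θ' n
    rw [ha, he, ← Complex.exp_nat_mul]
    congr 1; ring
  have einj : ∀ s t : ℝ, s ∈ Set.Ioc (-1 : ℝ) 1 → t ∈ Set.Ioc (-1 : ℝ) 1 →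
      e s = e t → s = t := by
    intro s t hs ht hst
    simp only [he] at hst
    rw [Complex.exp_eq_exp_iff_exists_int] at hst
    obtain ⟨n, hn⟩ := hst
    have h2 : Complex.I * (Real.pi : ℂ) * (((t : ℂ) - s) - 2 * n) = 0 := by
      linear_combination hn
    have h3 : ((t : ℂ) - s) - 2 * n = 0 := by
      rcases mul_eq_zero.mp h2 with h | h
      · exact absurd h (mul_ne_zero Complex.I_ne_zero hπ)
      · exact h
    have h4 : t - s - 2 * (n : ℝ) = 0 := by exact_mod_cast h3
    have hn0 : n = 0 := by
      have h6 : (-1 : ℝ) < n := by nlinarith [hs.2, ht.1]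
      have h7 : (n : ℝ) < 1 := by nlinarith [hs.1, ht.2]
      have h6' : (-1 : ℤ) < n := by exact_mod_cast h6
      have h7' : n < (1 : ℤ) := by exact_mod_cast h7
      omega
    rw [hn0] at h4; push_cast at h4; linarith
  set m := L + 1 with hm'
  have hmN : m ≤ N := hNL
  set z : Fin m → ℂ :=
    Fin.snoc (fun ℓ : Fin L => e (Real.sin (θs ℓ))) (e (Real.sin θ)) with hz'
  have hAz : ∀ n ℓ, A n ℓ = z ℓ.castSucc ^ (n : ℕ) := by
    intro n ℓ; rw [hA, hpow]; simp [hz']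
  have haz : ∀ n : Fin N, a θ n = z (Fin.last L) ^ (n : ℕ) := by
    intro n; rw [hpow]; simp [hz']
  have hW1 : W * Wᴴ = 1 := mem_unitaryGroup_iff.mp hW
  have hker : ∀ x : Fin N → ℂ, M *ᵥ x = 0 → Aᴴ *ᵥ (W *ᵥ x) = 0 := by
    intro x hx
    rw [hM] at hx
    simp only [← mulVec_mulVec] at hx
    have hWW : ∀ v : Fin N → ℂ, W *ᵥ (Wᴴ *ᵥ v) = v := fun v => by
      rw [mulVec_mulVec, hW1, one_mulVec]
    have h2 : A *ᵥ (H *ᵥ (Aᴴ *ᵥ (W *ᵥ x))) = 0 := by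
      have h := congrArg (fun v => W *ᵥ v) hx
      simp only [mulVec_zero] at h
      rwa [hWW] at h
    set u := Aᴴ *ᵥ (W *ᵥ x) with hu
    have h3 : star u ⬝ᵥ (H *ᵥ u) = 0 := by
      have hsu : star u = star (W *ᵥ x) ᵥ* A := by
        rw [hu, star_mulVec, conjTranspose_conjTranspose]
      rw [hsu, ← dotProduct_mulVec, h2, dotProduct_zero]
    by_contra hune
    exact (hH.dotProduct_mulVec_pos hune).ne' h3
  constructor
  · intro horth
    by_contra hno
    push_neg at hno
    have hzinj : Function.Injective z := by
      intro j k hjk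
      induction j using Fin.lastCases with
      | last =>
        induction k using Fin.lastCases with
        | last => rfl
        | cast k =>
          simp only [hz', Fin.snoc_last, Fin.snoc_castSucc] at hjk
          exact absurd (einj _ _ hθ (hrange k) hjk) (hno k)
      | cast j =>
        induction k using Fin.lastCases with
        | last =>
          simp only [hz', Fin.snoc_last, Fin.snoc_castSucc] at hjk
          exact absurd (einj _ _ hθ (hrange j) hjk.symm) (hno j)
        | cast k =>
          simp only [hz', Fin.snoc_castSucc] at hjk
          exact congrArg Fin.castSucc (hdist (einj _ _ (hrange j) (hrange k) hjk))
    set B : Matrix (Fin m) (Fin m) ℂ :=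
      Matrix.vandermonde (fun j => starRingEnd ℂ (z j)) with hB'
    have hBdet : B.det ≠ 0 := by
      rw [hB', Matrix.det_vandermonde]
      refine Finset.prod_ne_zero_iff.mpr fun i _ => Finset.prod_ne_zero_iff.mpr fun j hj => ?_
      rw [Finset.mem_Ioi] at hj
      intro hc
      have : z j = z i := star_injective (sub_eq_zero.mp hc)
      exact hj.ne' (hzinj this)
    have hBunit : IsUnit B.det := isUnit_iff_ne_zero.mpr hBdet
    set t : Fin m → ℂ := B⁻¹ *ᵥ Pi.single (Fin.last L) 1 with ht'
    have hBt : B *ᵥ t = Pi.single (Fin.last L) 1 := by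
      rw [ht', mulVec_mulVec, Matrix.mul_nonsing_inv _ hBunit, one_mulVec]
    set y : Fin N → ℂ := fun n => if h : (n : ℕ) < m then t ⟨(n : ℕ), h⟩ else 0 with hy'
    have key : ∀ j : Fin m,
        (∑ n : Fin N, starRingEnd ℂ (z j) ^ (n : ℕ) * y n) = (B *ᵥ t) j := by
      intro j
      have hsub : ((Finset.univ : Finset (Fin m)).map (Fin.castLEEmb hmN))
          ⊆ Finset.univ := Finset.subset_univ _
      have hvan : ∀ n ∈ (Finset.univ : Finset (Fin N)),
          n ∉ ((Finset.univ : Finset (Fin m)).map (Fin.castLEEmb hmN)) →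
          starRingEnd ℂ (z j) ^ (n : ℕ) * y n = 0 := by
        intro n _ hn
        have : ¬ (n : ℕ) < m := by
          intro hlt
          exact hn (Finset.mem_map.mpr ⟨⟨(n : ℕ), hlt⟩, Finset.mem_univ _, by
            simp [Fin.castLEEmb, Fin.ext_iff]⟩)
        simp [hy', this]
      rw [← Finset.sum_subset hsub hvan, Finset.sum_map]
      simp only [mulVec, dotProduct, hB', Matrix.vandermonde]
      refine Finset.sum_congr rfl fun i _ => ?_
      have h1 : ((Fin.castLEEmb hmN) i : ℕ) = (i : ℕ) := rfl
      have h2 : y ((Fin.castLEEmb hmN) i) = t i := by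
        simp [hy', h1, i.isLt]
      rw [h2]
      simp [h1, map_pow]
    have hw : ∀ j : Fin m,
        (∑ n : Fin N, starRingEnd ℂ (z j) ^ (n : ℕ) * y n)
          = (Pi.single (Fin.last L) 1 : Fin m → ℂ) j := by
      intro j; rw [key, hBt]
    have hAy : Aᴴ *ᵥ y = 0 := by
      funext ℓ
      have h1 := hw ℓ.castSucc
      have h2 : (Pi.single (Fin.last L) 1 : Fin m → ℂ) ℓ.castSucc = 0 := by
        rw [Pi.single_apply, if_neg]
        exact fun hc => absurd hc (Fin.castSucc_lt_last ℓ).ne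
      rw [h2] at h1
      simpa [mulVec, dotProduct, conjTranspose_apply, hAz, map_pow] using h1
    set x := Wᴴ *ᵥ y with hx'
    have hxker : M *ᵥ x = 0 := by
      have hMW : Wᴴ * A * H * Aᴴ * W * Wᴴ = Wᴴ * A * H * Aᴴ := by
        rw [Matrix.mul_assoc _ W Wᴴ, hW1, Matrix.mul_one]
      rw [hM, hx', mulVec_mulVec, hMW, ← mulVec_mulVec, hAy, mulVec_zero]
    have hsy : star y ⬝ᵥ a θ = 1 := by
      have h1 := hw (Fin.last L)
      rw [Pi.single_eq_same] at h1
      have h2 := congrArg (starRingEnd ℂ) h1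
      rw [map_sum, _root_.map_one] at h2
      calc star y ⬝ᵥ a θ
          = ∑ n : Fin N, starRingEnd ℂ (starRingEnd ℂ (z (Fin.last L)) ^ (n : ℕ) * y n) := by
            refine Finset.sum_congr rfl fun n _ => ?_
            simp only [Pi.star_apply, _root_.map_mul, map_pow, Complex.conj_conj,
              Complex.star_def, haz]
            ring
        _ = 1 := h2
    have hdot : star x ⬝ᵥ (Wᴴ *ᵥ a θ) = 1 := by
      calc star x ⬝ᵥ (Wᴴ *ᵥ a θ)
          = (star y ᵥ* W) ⬝ᵥ (Wᴴ *ᵥ a θ) := by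
            rw [hx', star_mulVec, conjTranspose_conjTranspose]
        _ = star y ⬝ᵥ (W *ᵥ (Wᴴ *ᵥ a θ)) := (dotProduct_mulVec _ _ _).symm
        _ = star y ⬝ᵥ a θ := by rw [mulVec_mulVec, hW1, one_mulVec]
        _ = 1 := hsy
    have := horth x (by simpa [LinearMap.mem_ker, mulVecLin_apply] using hxker)
    rw [hdot] at this
    exact one_ne_zero this
  · rintro ⟨ℓ, hℓ⟩ x hx
    have hx0 : Aᴴ *ᵥ (W *ᵥ x) = 0 :=
      hker x (by simpa [LinearMap.mem_ker, mulVecLin_apply] using hx)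
    have haθ : a θ = fun n => A n ℓ := by
      funext n; rw [ha, hA, ha, hℓ]
    calc star x ⬝ᵥ (Wᴴ *ᵥ a θ)
        = star (W *ᵥ x) ⬝ᵥ a θ := by rw [dotProduct_mulVec, ← star_mulVec]
      _ = starRingEnd ℂ ((Aᴴ *ᵥ (W *ᵥ x)) ℓ) := by
          set w := W *ᵥ x with hw'
          have : (Aᴴ *ᵥ w) ℓ = ∑ n, starRingEnd ℂ (A n ℓ) * w n := by
            simp [mulVec, dotProduct, conjTranspose_apply]
          rw [this, map_sum, haθ]
          refine Finset.sum_congr rfl fun n _ => ?_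
          simp only [Pi.star_apply, _root_.map_mul, Complex.conj_conj, Complex.star_def]
          ring
      _ = 0 := by rw [hx0]; simp
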